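/- The set of pairs (C, γ) ∈ F(ℓ²) × C¹([0,1], ℓ²) such that H¹(C ∩ ran γ) > 0 is Borel, where F(ℓ²) carries the Effros Borel structure and C¹([0,1], ℓ²) the topology of the C¹ norm. -/

import Mathlib

open MeasureTheory

noncomputable abbrev ℓ2 : Type := lp (fun _ : ℕ => ℝ) 2
noncomputable instance : MeasurableSpace ℓ2 := borel _
instance : BorelSpace ℓ2 := ⟨rfl⟩

/-- The space `F(ℓ²)` of closed subsets of `ℓ²`. -/
def Fl2 : Type := {A : Set ℓ2 // IsClosed A}

/-- The Effros Borel structure on `F(ℓ²)`, generated by the sets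
`{A : A ∩ U ≠ ∅}` for `U` open. -/
instance : MeasurableSpace Fl2 :=
  MeasurableSpace.generateFrom
    {S | ∃ U : Set ℓ2, IsOpen U ∧ S = {A : Fl2 | (A.1 ∩ U).Nonempty}}

/-- The space of `C¹` curves into `ℓ²`. -/
def C1Curves : Type := {γ : ℝ → ℓ2 // ContDiff ℝ 1 γ}

/-- A `C¹` curve gives the pair of continuous maps on `[0,1]`: the curve itself and its
Fréchet derivative; the `C¹` topology is the one induced by this pair (uniform convergence
of the curve and of its derivative on `[0,1]`). -/
noncomputable def c1Pair (γ : C1Curves) :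
    C(Set.Icc (0:ℝ) 1, ℓ2) × C(Set.Icc (0:ℝ) 1, ℝ →L[ℝ] ℓ2) :=
  (⟨fun t => γ.1 t, γ.2.continuous.comp continuous_subtype_val⟩,
   ⟨fun t => fderiv ℝ γ.1 t, (γ.2.continuous_fderiv one_ne_zero).comp continuous_subtype_val⟩)

/-- The `C¹` (sup norm of curve and derivative) topology on `C1Curves`. -/
noncomputable instance : TopologicalSpace C1Curves :=
  TopologicalSpace.induced c1Pair inferInstance

noncomputable instance : MeasurableSpace C1Curves := borel _
instance : BorelSpace C1Curves := ⟨rfl⟩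

/-! ### Auxiliary material -/

open Metric Set Filter

namespace Statement14

lemma single_sub (i : ℕ) (a b : ℝ) :
    lp.single (E := fun _ : ℕ => ℝ) 2 i a - lp.single 2 i b = lp.single 2 i (a - b) := by
  refine lp.ext (funext fun j => ?_)
  rw [lp.coeFn_sub, Pi.sub_apply, lp.single_apply, lp.single_apply, lp.single_apply]
  by_cases h : j = i
  · subst h; simp
  · simp [h]

lemma norm_single' (i : ℕ) (a : ℝ) :
    ‖lp.single (E := fun _ : ℕ => ℝ) 2 i a‖ = |a| := by
  have := lp.norm_single (E := fun _ : ℕ => ℝ) (p := 2) (by norm_num) i a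
  simpa using this

/-- `ℓ²` is separable. -/
instance : TopologicalSpace.SeparableSpace ℓ2 := by
  constructor
  refine ⟨Set.range (fun v : (Σ n : ℕ, Fin n → ℚ) =>
    (∑ i : Fin v.1, lp.single 2 (i : ℕ) ((v.2 i : ℝ)) : ℓ2)), Set.countable_range _, ?_⟩
  intro f
  rw [Metric.mem_closure_iff]
  intro ε hε
  have hsum := (lp.hasSum_single (E := fun _ : ℕ => ℝ) (p := 2)
    ENNReal.ofNat_ne_top f).tendsto_sum_nat
  obtain ⟨N, hN⟩ := (Metric.tendsto_atTop.1 hsum) (ε / 2) (by positivity)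
  have hN' : dist (∑ i ∈ Finset.range N, lp.single 2 i (f i)) f < ε / 2 := hN N le_rfl
  choose q hqlt using fun i : Fin N =>
    exists_rat_near ((f : ∀ _ : ℕ, ℝ) i) (show (0:ℝ) < ε / (2 * (N + 1)) by positivity)
  refine ⟨∑ i : Fin N, lp.single 2 (i : ℕ) ((q i : ℝ)), ⟨⟨N, q⟩, rfl⟩, ?_⟩
  have hdiff : dist (∑ i : Fin N, lp.single (E := fun _ : ℕ => ℝ) 2 (i : ℕ) ((q i : ℝ)))
      (∑ i : Fin N, lp.single 2 (i : ℕ) (f i)) ≤ ∑ i : Fin N, |(f : ∀ _ : ℕ, ℝ) i - (q i : ℝ)| := by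
    rw [dist_eq_norm, ← Finset.sum_sub_distrib]
    refine le_trans (norm_sum_le _ _) (Finset.sum_le_sum fun i _ => ?_)
    rw [single_sub, norm_single']
    rw [abs_sub_comm]
  have hsmall : (∑ i : Fin N, |(f : ∀ _ : ℕ, ℝ) i - (q i : ℝ)|) < ε / 2 := by
    calc (∑ i : Fin N, |(f : ∀ _ : ℕ, ℝ) i - (q i : ℝ)|)
        ≤ ∑ _i : Fin N, ε / (2 * (N + 1)) :=
          Finset.sum_le_sum fun i _ => le_of_lt (hqlt i)
      _ = N * (ε / (2 * (N + 1))) := by rw [Finset.sum_const]; simp [mul_comm]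
      _ = ε / 2 * ((N:ℝ) / ((N:ℝ) + 1)) := by field_simp
      _ < ε / 2 * 1 := by
          refine mul_lt_mul_of_pos_left ?_ (by positivity)
          rw [div_lt_one (by positivity)]
          linarith [Nat.cast_nonneg (α := ℝ) N]
      _ = ε / 2 := mul_one _
  have heq : (∑ i : Fin N, lp.single (E := fun _ : ℕ => ℝ) 2 (i : ℕ) (f i)) =
      ∑ i ∈ Finset.range N, lp.single 2 i (f i) :=
    Fin.sum_univ_eq_sum_range (fun i => lp.single 2 i (f i)) N
  calc dist f (∑ i : Fin N, lp.single 2 (i : ℕ) ((q i : ℝ)))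
      ≤ dist f (∑ i : Fin N, lp.single (E := fun _ : ℕ => ℝ) 2 (i : ℕ) (f i)) +
        dist (∑ i : Fin N, lp.single (E := fun _ : ℕ => ℝ) 2 (i : ℕ) (f i))
          (∑ i : Fin N, lp.single 2 (i : ℕ) ((q i : ℝ))) := dist_triangle _ _ _
    _ < ε / 2 + ε / 2 := by
        refine add_lt_add_of_lt_of_le ?_ ?_
        · rw [heq, dist_comm]; exact hN'
        · rw [dist_comm]; exact le_of_lt (lt_of_le_of_lt hdiff hsmall)
    _ = ε := by ring

noncomputable def e : ℕ → ℓ2 := TopologicalSpace.denseSeq ℓ2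

lemma denseRange_e : DenseRange e := TopologicalSpace.denseRange_denseSeq ℓ2

/-- The closed set determined by a finite family of closed balls with centers in the
countable dense set and rational radii. -/
def ballSet (L : Finset (ℕ × ℚ)) : Set ℓ2 :=
  ⋃ p ∈ L, closedBall (e p.1) |(p.2 : ℝ)|

lemma isClosed_ballSet (L : Finset (ℕ × ℚ)) : IsClosed (ballSet L) :=
  L.finite_toSet.isClosed_biUnion fun _ _ => isClosed_closedBall

/-- Sum over an image is at most the pulled-back sum, for nonnegative weights. -/
lemma sum_image_le {α β : Type*} [DecidableEq β] (s : Finset α) (f : α → β) (g : β → ℝ)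
    (hg : ∀ b, 0 ≤ g b) : (s.image f).sum g ≤ s.sum (g ∘ f) := by
  classical
  induction s using Finset.induction with
  | empty => simp
  | @insert a s ha ih =>
    rw [Finset.image_insert, Finset.sum_insert ha]
    by_cases h : f a ∈ s.image f
    · rw [Finset.insert_eq_self.2 h]
      exact le_add_of_nonneg_of_le (hg _) ih
    · rw [Finset.sum_insert h]
      exact add_le_add le_rfl ih

/-- Characterization of vanishing `H¹` measure of a compact set via finite covers by
closed balls with centers in the dense sequence and rational radii. -/
lemma measure_zero_iff_covers {S : Set ℓ2} (hS : IsCompact S) :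
    μH[1] S = 0 ↔ ∀ n : ℕ, ∃ L : Finset (ℕ × ℚ),
      (∑ p ∈ L, 2 * |(p.2 : ℝ)|) < 1 / (n + 1) ∧ S ⊆ ballSet L := by
  classical
  constructor
  · -- measure zero implies covers
    intro h n
    set ε : ℝ := 1 / (n + 1) with hεdef
    have hε : (0:ℝ) < ε := by positivity
    set εk : ℕ → ℝ := fun k => ε / 16 * (1 / 2) ^ (k + 1) with hεk
    have hεkpos : ∀ k, 0 < εk k := fun k => by positivity
    -- extract a countable cover with small total diameter
    have h0 : (⨅ (t : ℕ → Set ℓ2) (_ : S ⊆ ⋃ k, t k) (_ : ∀ k, EMetric.diam (t k) ≤ 1),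
        ∑' k, ⨆ _ : (t k).Nonempty, EMetric.diam (t k) ^ (1:ℝ)) = 0 := by
      refine le_antisymm ?_ zero_le
      rw [← h, Measure.hausdorffMeasure_apply]
      exact le_iSup_of_le 1 (le_iSup_of_le one_pos le_rfl)
    have hlt : (⨅ (t : ℕ → Set ℓ2) (_ : S ⊆ ⋃ k, t k) (_ : ∀ k, EMetric.diam (t k) ≤ 1),
        ∑' k, ⨆ _ : (t k).Nonempty, EMetric.diam (t k) ^ (1:ℝ)) < ENNReal.ofReal (ε / 16) := by
      rw [h0]; exact ENNReal.ofReal_pos.2 (by positivity)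
    obtain ⟨t, ht⟩ := iInf_lt_iff.1 hlt
    obtain ⟨hcov, ht⟩ := iInf_lt_iff.1 ht
    obtain ⟨hdiam, hsum⟩ := iInf_lt_iff.1 ht
    simp only [ENNReal.rpow_one] at hsum
    have hdiam_ne : ∀ k, EMetric.diam (t k) ≠ ⊤ := fun k => ((hdiam k).trans_lt (by simp)).ne
    have hbdd : ∀ k, Bornology.IsBounded (t k) := fun k =>
      Metric.isBounded_iff_ediam_ne_top.2 (hdiam_ne k)
    -- open enlargements
    set U : ℕ → Set ℓ2 := fun k =>
      if h : (t k).Nonempty then ball h.some (Metric.diam (t k) + εk k) else ∅ with hU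
    have hUopen : ∀ k, IsOpen (U k) := by
      intro k
      simp only [hU]
      by_cases h : (t k).Nonempty
      · simp only [dif_pos h]; exact isOpen_ball
      · simp only [dif_neg h]; exact isOpen_empty
    have htU : ∀ k, t k ⊆ U k := by
      intro k y hy
      have hne : (t k).Nonempty := ⟨y, hy⟩
      rw [hU]; simp only [dif_pos hne]
      exact mem_ball.2 (lt_of_le_of_lt
        (Metric.dist_le_diam_of_mem (hbdd k) hy hne.some_mem) (by linarith [hεkpos k]))
    obtain ⟨F, hF⟩ := hS.elim_finite_subcover U hUopen
      (fun x hx => by obtain ⟨k, hk⟩ := Set.mem_iUnion.1 (hcov hx)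
                      exact Set.mem_iUnion.2 ⟨k, htU k hk⟩)
    -- choose approximating balls with dense centers and rational radii
    have hchoice : ∀ k : ℕ, ∃ ir : ℕ × ℚ,
        U k ⊆ closedBall (e ir.1) |(ir.2 : ℝ)| ∧
        |(ir.2 : ℝ)| ≤ Metric.diam (t k) + 3 * εk k := by
      intro k
      by_cases hne : (t k).Nonempty
      · obtain ⟨i, hi⟩ := denseRange_e.exists_dist_lt hne.some (hεkpos k)
        obtain ⟨r, hr1, hr2⟩ := exists_rat_btwn
          (show Metric.diam (t k) + 2 * εk k < Metric.diam (t k) + 3 * εk k by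
            linarith [hεkpos k])
        have hrpos : (0:ℝ) < r :=
          lt_of_le_of_lt (by linarith [Metric.diam_nonneg (s := t k), hεkpos k]) hr1
        have habs : |(r : ℝ)| = (r : ℝ) := abs_of_pos hrpos
        refine ⟨⟨i, r⟩, ?_, by rw [habs]; exact le_of_lt hr2⟩
        intro z hz
        rw [hU] at hz; simp only [dif_pos hne] at hz
        have hz' : dist z hne.some < Metric.diam (t k) + εk k := mem_ball.1 hz
        refine mem_closedBall.2 ?_
        rw [habs]
        calc dist z (e i) ≤ dist z hne.some + dist hne.some (e i) := dist_triangle _ _ _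
          _ ≤ Metric.diam (t k) + 2 * εk k := by linarith
          _ ≤ (r : ℝ) := le_of_lt hr1
      · refine ⟨⟨0, 0⟩, ?_, ?_⟩
        · rw [hU]; simp only [dif_neg hne]; exact Set.empty_subset _
        · simp only [Rat.cast_zero, abs_zero]
          have := Metric.diam_nonneg (s := t k)
          linarith [hεkpos k]
    choose ir hirsub hirbound using hchoice
    refine ⟨F.image ir, ?_, ?_⟩
    · -- the sum is small
      have h1 : (∑ p ∈ F.image ir, 2 * |(p.2 : ℝ)|) ≤ ∑ k ∈ F, 2 * |((ir k).2 : ℝ)| :=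
        sum_image_le F ir (fun p => 2 * |(p.2 : ℝ)|) (fun b => by positivity)
      have h2 : (∑ k ∈ F, 2 * |((ir k).2 : ℝ)|) ≤
          2 * (∑ k ∈ F, Metric.diam (t k)) + 6 * (∑ k ∈ F, εk k) := by
        rw [Finset.mul_sum, Finset.mul_sum, ← Finset.sum_add_distrib]
        exact Finset.sum_le_sum fun k _ => by linarith [hirbound k]
      have h3 : (∑ k ∈ F, Metric.diam (t k)) ≤ ε / 16 := by
        have hsum' : (∑ k ∈ F, EMetric.diam (t k)) ≤
            ∑' k, ⨆ _ : (t k).Nonempty, EMetric.diam (t k) := by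
          refine le_trans (Finset.sum_le_sum fun k _ => ?_) (ENNReal.sum_le_tsum F)
          by_cases hne : (t k).Nonempty
          · exact le_iSup_of_le hne le_rfl
          · rw [Set.not_nonempty_iff_eq_empty.1 hne]; simp; exact Metric.ediam_empty
        have hle := le_of_lt (lt_of_le_of_lt hsum' hsum)
        have := ENNReal.toReal_mono ENNReal.ofReal_ne_top hle
        rw [ENNReal.toReal_ofReal (by positivity)] at this
        refine le_trans (le_of_eq ?_) this
        rw [ENNReal.toReal_sum (fun k _ => hdiam_ne k)]
        exact Finset.sum_congr rfl fun k _ => rfl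
      have h4 : (∑ k ∈ F, εk k) ≤ ε / 16 := by
        have hs : Summable (fun k : ℕ => (1/2:ℝ)^(k+1)) := by
          have hgeo := summable_geometric_of_lt_one (r := (1/2:ℝ)) (by norm_num) (by norm_num)
          exact (summable_nat_add_iff 1).2 hgeo
        have htsum : ∑' k : ℕ, (1/2:ℝ)^(k+1) = 1 := by
          have hg := tsum_geometric_of_lt_one (r := (1/2:ℝ)) (by norm_num) (by norm_num)
          calc ∑' k : ℕ, (1/2:ℝ)^(k+1) = ∑' k : ℕ, (1/2) * (1/2:ℝ)^k :=
                tsum_congr fun k => by ring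
            _ = (1/2) * ∑' k : ℕ, ((1/2:ℝ))^k := tsum_mul_left
            _ = 1 := by rw [hg]; norm_num
        calc (∑ k ∈ F, εk k) = ε/16 * ∑ k ∈ F, (1/2:ℝ)^(k+1) := by
              rw [Finset.mul_sum]
          _ ≤ ε/16 * 1 := by
              refine mul_le_mul_of_nonneg_left
                (le_trans (Summable.sum_le_tsum F (fun k _ => by positivity) hs)
                  (le_of_eq htsum)) (by positivity)
          _ = ε/16 := by ring
      calc (∑ p ∈ F.image ir, 2 * |(p.2 : ℝ)|) ≤ _ := h1
        _ ≤ _ := h2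
        _ ≤ 2 * (ε / 16) + 6 * (ε / 16) := by linarith
        _ < ε := by linarith
    · -- it covers
      intro x hx
      obtain ⟨k, hkF, hkx⟩ := Set.mem_iUnion₂.1 (hF hx)
      exact Set.mem_iUnion₂.2 ⟨ir k, Finset.mem_image_of_mem ir hkF, hirsub k hkx⟩
  · -- covers imply measure zero
    intro h
    refine le_antisymm ?_ zero_le
    choose L hLsum hLcov using h
    have hterm1 : ∀ (n : ℕ) (p : ℕ × ℚ), p ∈ L n →
        EMetric.diam (closedBall (e p.1) |(p.2 : ℝ)|) ≤ ENNReal.ofReal (2 * |(p.2 : ℝ)|) := by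
      intro n p _
      refine EMetric.diam_le fun x hx y hy => ?_
      rw [edist_dist]
      refine ENNReal.ofReal_le_ofReal ?_
      have h1 : dist x (e p.1) ≤ |(p.2:ℝ)| := mem_closedBall.1 hx
      have h2 : dist y (e p.1) ≤ |(p.2:ℝ)| := mem_closedBall.1 hy
      calc dist x y ≤ dist x (e p.1) + dist (e p.1) y := dist_triangle _ _ _
        _ ≤ 2 * |(p.2:ℝ)| := by rw [dist_comm (e p.1) y]; linarith
    have hterm2 : ∀ (n : ℕ) (p : ℕ × ℚ), p ∈ L n → 2 * |(p.2 : ℝ)| ≤ 1 / (n + 1) := by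
      intro n p hp
      refine le_of_lt (lt_of_le_of_lt ?_ (hLsum n))
      exact Finset.single_le_sum (f := fun p : ℕ×ℚ => 2 * |(p.2:ℝ)|)
        (fun q _ => by positivity) hp
    have hle := MeasureTheory.Measure.hausdorffMeasure_le_liminf_sum (X := ℓ2) 1 S
      (l := Filter.atTop) (fun n : ℕ => ENNReal.ofReal (1 / (n + 1)))
      ?_ (fun n (p : ↥(L n)) => closedBall (e p.1.1) |(p.1.2 : ℝ)|) ?_ ?_
    rotate_left
    · simpa using ENNReal.tendsto_ofReal tendsto_one_div_add_atTop_nhds_zero_nat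
    · exact Filter.Eventually.of_forall fun n p =>
        le_trans (hterm1 n p.1 p.2) (ENNReal.ofReal_le_ofReal (hterm2 n p.1 p.2))
    · refine Filter.Eventually.of_forall fun n x hx => ?_
      obtain ⟨p, hp, hxp⟩ := Set.mem_iUnion₂.1 (hLcov n hx)
      exact Set.mem_iUnion.2 ⟨⟨p, hp⟩, hxp⟩
    refine le_trans hle ?_
    have hB : ∀ n : ℕ,
        (∑ p : ↥(L n), EMetric.diam (closedBall (e p.1.1) |(p.1.2 : ℝ)|) ^ (1:ℝ))
        ≤ ENNReal.ofReal (1 / (n + 1)) := by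
      intro n
      simp only [ENNReal.rpow_one]
      calc (∑ p : ↥(L n), EMetric.diam (closedBall (e p.1.1) |(p.1.2 : ℝ)|))
          ≤ ∑ p : ↥(L n), ENNReal.ofReal (2 * |(p.1.2 : ℝ)|) :=
            Finset.sum_le_sum fun p _ => hterm1 n p.1 p.2
        _ = ENNReal.ofReal (∑ p : ↥(L n), 2 * |(p.1.2 : ℝ)|) :=
            (ENNReal.ofReal_sum_of_nonneg (fun p _ => by positivity)).symm
        _ ≤ ENNReal.ofReal (1 / (n + 1)) := by
            refine ENNReal.ofReal_le_ofReal (le_of_lt ?_)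
            rw [show (∑ p : ↥(L n), 2 * |(p.1.2 : ℝ)|) = ∑ p ∈ L n, 2 * |(p.2 : ℝ)| from
              Finset.sum_coe_sort (L n) (fun p => 2 * |(p.2:ℝ)|)]
            exact hLsum n
    refine le_trans (Filter.liminf_le_liminf (Filter.Eventually.of_forall hB)) ?_
    have htend : Filter.Tendsto (fun n : ℕ => ENNReal.ofReal (1 / (n + 1)))
        Filter.atTop (nhds 0) := by
      simpa using ENNReal.tendsto_ofReal tendsto_one_div_add_atTop_nhds_zero_nat
    rw [htend.liminf_eq]

/-- Characterization of `C ∩ γ([0,1])` meeting an open set, by countably many conditions. -/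
lemma meets_open_iff {C : Set ℓ2} (hC : IsClosed C) {γ : ℝ → ℓ2} (hγ : Continuous γ)
    {W : Set ℓ2} (hW : IsOpen W) :
    (C ∩ γ '' Icc (0:ℝ) 1 ∩ W).Nonempty ↔
      ∃ i : ℕ, ∃ r : ℚ, closedBall (e i) (r : ℝ) ⊆ W ∧
        ∀ m : ℕ, ∃ q : ℚ, (q : ℝ) ∈ Icc (0:ℝ) 1 ∧
          (C ∩ ball (γ q) (1 / (m + 1))).Nonempty ∧
          dist (γ q) (e i) < (r : ℝ) + 1 / (m + 1) := by
  constructor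
  · rintro ⟨y, ⟨hyC, ⟨t, ht, rfl⟩⟩, hyW⟩
    obtain ⟨ε, hε, hball⟩ := Metric.isOpen_iff.1 hW _ hyW
    obtain ⟨i, hi⟩ := denseRange_e.exists_dist_lt (γ t) (by positivity : (0:ℝ) < ε / 4)
    obtain ⟨r, hr1, hr2⟩ := exists_rat_btwn (show ε / 4 < ε / 2 by linarith)
    refine ⟨i, r, ?_, ?_⟩
    · intro z hz
      apply hball
      have hz' : dist z (e i) ≤ (r : ℝ) := mem_closedBall.1 hz
      have : dist z (γ t) ≤ dist z (e i) + dist (e i) (γ t) := dist_triangle _ _ _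
      rw [dist_comm (e i) (γ t)] at this
      exact mem_ball.2 (by linarith)
    · intro m
      have hm : (0:ℝ) < 1 / (m + 1) := by positivity
      obtain ⟨δ, hδ, hcont⟩ := Metric.continuous_iff.1 hγ t (min (1 / (m + 1)) (ε / 4))
        (lt_min hm (by positivity))
      -- find a rational point of [0,1] within δ of t
      have hab : max (t - δ / 2) 0 < min (t + δ / 2) 1 := by
        rcases lt_or_eq_of_le ht.2 with h1 | h1
        · exact max_lt (lt_min (by linarith) (by linarith))
            (lt_min (by linarith [ht.1]) (by norm_num))
        · exact max_lt (lt_min (by linarith) (by rw [h1]; linarith))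
            (lt_min (by linarith [ht.1]) (by norm_num))
      obtain ⟨q, hq1, hq2⟩ := exists_rat_btwn hab
      have hqI : (q : ℝ) ∈ Icc (0:ℝ) 1 :=
        ⟨le_of_lt (lt_of_le_of_lt (le_max_right _ _) hq1),
         le_of_lt (lt_of_lt_of_le hq2 (min_le_right _ _))⟩
      have hqt : dist (q : ℝ) t < δ := by
        rw [Real.dist_eq, abs_lt]
        constructor
        · have := lt_of_le_of_lt (le_max_left _ _) hq1; linarith
        · have := lt_of_lt_of_le hq2 (min_le_left _ _); linarith
      have hnear := hcont _ hqt
      have hnear1 : dist (γ q) (γ t) < 1 / (m + 1) := lt_of_lt_of_le hnear (min_le_left _ _)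
      have hnear2 : dist (γ q) (γ t) < ε / 4 := lt_of_lt_of_le hnear (min_le_right _ _)
      refine ⟨q, hqI, ⟨γ t, hyC, mem_ball.2 ?_⟩, ?_⟩
      · rw [dist_comm]; exact hnear1
      · calc dist (γ q) (e i) ≤ dist (γ q) (γ t) + dist (γ t) (e i) := dist_triangle _ _ _
          _ < 1 / (m + 1) + ε / 4 := by linarith
          _ ≤ (r : ℝ) + 1 / (m + 1) := by linarith
  · rintro ⟨i, r, hsub, h⟩
    -- the nested compact sets
    set A : ℕ → Set ℝ := fun m => {t ∈ Icc (0:ℝ) 1 |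
      Metric.infDist (γ t) C ≤ 1 / (m + 1) ∧ dist (γ t) (e i) ≤ (r : ℝ) + 1 / (m + 1)} with hA
    have hCne : C.Nonempty := by
      obtain ⟨q, _, ⟨c, hc, _⟩, _⟩ := h 0
      exact ⟨c, hc⟩
    have hclosed : ∀ m, IsClosed (A m) := by
      intro m
      refine isClosed_Icc.inter (IsClosed.inter ?_ ?_)
      · exact isClosed_le ((Metric.continuous_infDist_pt C).comp hγ) continuous_const
      · exact isClosed_le (Continuous.dist hγ continuous_const) continuous_const
    have hne : ∀ m, (A m).Nonempty := by
      intro m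
      obtain ⟨q, hqI, ⟨c, hcC, hcb⟩, hqd⟩ := h m
      refine ⟨(q : ℝ), hqI, ?_, le_of_lt hqd⟩
      exact le_of_lt (lt_of_le_of_lt (Metric.infDist_le_dist_of_mem hcC)
        (by rw [dist_comm]; exact mem_ball.1 hcb))
    have hanti : ∀ m, A (m + 1) ⊆ A m := by
      intro m t ⟨htI, h1, h2⟩
      have hle : 1 / ((m:ℝ) + 1 + 1) ≤ 1 / ((m:ℝ) + 1) := by
        apply one_div_le_one_div_of_le <;> [linarith; linarith]
      refine ⟨htI, le_trans h1 ?_, le_trans h2 ?_⟩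
      · push_cast; push_cast at hle; linarith
      · push_cast; push_cast at hle; linarith
    have hcomp0 : IsCompact (A 0) :=
      isCompact_Icc.of_isClosed_subset (hclosed 0) (fun t ht => ht.1)
    obtain ⟨t, ht⟩ := IsCompact.nonempty_iInter_of_sequence_nonempty_isCompact_isClosed
      A hanti hne hcomp0 hclosed
    simp only [Set.mem_iInter] at ht
    have htI : t ∈ Icc (0:ℝ) 1 := (ht 0).1
    have hinf : Metric.infDist (γ t) C = 0 := by
      refine le_antisymm ?_ (Metric.infDist_nonneg)
      refine le_of_forall_pos_le_add fun ε hε => ?_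
      obtain ⟨m, hm⟩ := exists_nat_one_div_lt hε
      calc Metric.infDist (γ t) C ≤ 1 / (m + 1) := (ht m).2.1
        _ ≤ 0 + ε := by push_cast; push_cast at hm; linarith
    have hγtC : γ t ∈ C := (hC.mem_iff_infDist_zero hCne).2 hinf
    have hdist : dist (γ t) (e i) ≤ (r : ℝ) := by
      refine le_of_forall_pos_le_add fun ε hε => ?_
      obtain ⟨m, hm⟩ := exists_nat_one_div_lt hε
      calc dist (γ t) (e i) ≤ (r : ℝ) + 1 / (m + 1) := (ht m).2.2
        _ ≤ (r : ℝ) + ε := by push_cast; push_cast at hm; linarith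
    exact ⟨γ t, ⟨hγtC, ⟨t, htI, rfl⟩⟩, hsub (mem_closedBall.2 hdist)⟩

/-- The master pointwise characterization. -/
lemma key {C : Set ℓ2} (hC : IsClosed C) {γ : ℝ → ℓ2} (hγ : Continuous γ) :
    (0 < μH[1] (C ∩ γ '' Icc (0:ℝ) 1)) ↔
      ∃ n : ℕ, ∀ L : Finset (ℕ × ℚ), (∑ p ∈ L, 2 * |(p.2 : ℝ)|) < 1 / (n + 1) →
        ∃ i : ℕ, ∃ r : ℚ, closedBall (e i) (r : ℝ) ⊆ (ballSet L)ᶜ ∧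
          ∀ m : ℕ, ∃ q : ℚ, (q : ℝ) ∈ Icc (0:ℝ) 1 ∧
            (C ∩ ball (γ q) (1 / (m + 1))).Nonempty ∧
            dist (γ q) (e i) < (r : ℝ) + 1 / (m + 1) := by
  have hK : IsCompact (γ '' Icc (0:ℝ) 1) := (isCompact_Icc.image hγ)
  have hS : IsCompact (C ∩ γ '' Icc (0:ℝ) 1) := hK.inter_left hC
  rw [pos_iff_ne_zero, Ne, measure_zero_iff_covers hS]
  push_neg
  refine exists_congr fun n => forall_congr' fun L => imp_congr_right fun _ => ?_
  rw [← Set.inter_compl_nonempty_iff]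
  exact meets_open_iff hC hγ (isClosed_ballSet L).isOpen_compl

/-- Evaluation at a point of `[0,1]` is continuous on `C1Curves`. -/
lemma continuous_eval {q : ℝ} (hq : q ∈ Icc (0:ℝ) 1) :
    Continuous fun γ : C1Curves => γ.1 q := by
  have h1 : Continuous (c1Pair) := continuous_induced_dom
  exact (continuous_eval_const (⟨q, hq⟩ : Icc (0:ℝ) 1)).comp
    (continuous_fst.comp h1)

/-- Measurability of the elementary sets. -/
lemma measurable_S {q : ℝ} (hq : q ∈ Icc (0:ℝ) 1) (ε : ℝ) (x : ℓ2) (c : ℝ) :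
    MeasurableSet {p : Fl2 × C1Curves |
      (p.1.1 ∩ ball (p.2.1 q) ε).Nonempty ∧ dist (p.2.1 q) x < c} := by
  have h2 : MeasurableSet {p : Fl2 × C1Curves | dist (p.2.1 q) x < c} := by
    have h2' : MeasurableSet {γ : C1Curves | dist (γ.1 q) x < c} :=
      (isOpen_ball.preimage (continuous_eval hq)).measurableSet
    exact measurable_snd h2'
  have h1 : MeasurableSet {p : Fl2 × C1Curves | (p.1.1 ∩ ball (p.2.1 q) ε).Nonempty} := by
    have hrw : {p : Fl2 × C1Curves | (p.1.1 ∩ ball (p.2.1 q) ε).Nonempty} =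
        ⋃ (j : ℕ) (s : ℚ) (u : ℚ) (_ : (s : ℝ) + (u : ℝ) ≤ ε),
          ({C : Fl2 | (C.1 ∩ ball (e j) (s : ℝ)).Nonempty} ×ˢ
            {γ : C1Curves | dist (γ.1 q) (e j) < (u : ℝ)}) := by
      ext p
      simp only [Set.mem_setOf_eq, Set.mem_iUnion, Set.mem_prod, Set.mem_setOf_eq]
      constructor
      · rintro ⟨y, hyC, hy⟩
        have hd : dist y (p.2.1 q) < ε := mem_ball.1 hy
        set δ : ℝ := (ε - dist y (p.2.1 q)) / 5 with hδdef
        have hδ : 0 < δ := by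
          have : 0 < ε - dist y (p.2.1 q) := by linarith
          positivity
        obtain ⟨j, hj⟩ := denseRange_e.exists_dist_lt y hδ
        obtain ⟨s, hs1, hs2⟩ := exists_rat_btwn (show δ < 2 * δ by linarith)
        have hup : dist (p.2.1 q) (e j) < dist y (p.2.1 q) + δ := by
          calc dist (p.2.1 q) (e j) ≤ dist (p.2.1 q) y + dist y (e j) := dist_triangle _ _ _
            _ < dist y (p.2.1 q) + δ := by rw [dist_comm (p.2.1 q) y]; linarith
        obtain ⟨u, hu1, hu2⟩ := exists_rat_btwn
          (show dist y (p.2.1 q) + δ < dist y (p.2.1 q) + 2 * δ by linarith)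
        refine ⟨j, s, u, by linarith, ⟨y, hyC, mem_ball.2 ?_⟩, ?_⟩
        · exact hj.trans hs1
        · exact hup.trans hu1
      · rintro ⟨j, s, u, hsu, ⟨y, hyC, hys⟩, hu⟩
        refine ⟨y, hyC, mem_ball.2 ?_⟩
        have h1 := mem_ball.1 hys
        calc dist y (p.2.1 q) ≤ dist y (e j) + dist (e j) (p.2.1 q) := dist_triangle _ _ _
          _ < (s : ℝ) + (u : ℝ) := by rw [dist_comm (e j) (p.2.1 q)]; linarith
          _ ≤ ε := hsu
    rw [hrw]
    refine MeasurableSet.iUnion fun j => MeasurableSet.iUnion fun s =>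
      MeasurableSet.iUnion fun u => MeasurableSet.iUnion fun _ => MeasurableSet.prod ?_ ?_
    · exact MeasurableSpace.measurableSet_generateFrom ⟨ball (e j) (s : ℝ), isOpen_ball, rfl⟩
    · exact (isOpen_ball.preimage (continuous_eval hq)).measurableSet
  exact h1.inter h2

end Statement14

open Statement14 in
/-- the set of pairs `(C, γ)` with `H¹(C ∩ ran γ) > 0` is Borel in
`F(ℓ²) × C¹([0,1], ℓ²)`. -/
theorem measurable_positive_intersection :
    MeasurableSet {p : Fl2 × C1Curves |
      0 < μH[1] (p.1.1 ∩ p.2.1 '' Set.Icc (0:ℝ) 1)} := by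
  have hset : {p : Fl2 × C1Curves | 0 < μH[1] (p.1.1 ∩ p.2.1 '' Set.Icc (0:ℝ) 1)} =
      ⋃ n : ℕ, ⋂ L : Finset (ℕ × ℚ), ⋂ (_ : (∑ p ∈ L, 2 * |(p.2 : ℝ)|) < 1 / (n + 1)),
        ⋃ i : ℕ, ⋃ r : ℚ, ⋃ (_ : closedBall (e i) (r : ℝ) ⊆ (ballSet L)ᶜ),
          ⋂ m : ℕ, ⋃ q : ℚ, ⋃ (_ : (q : ℝ) ∈ Set.Icc (0:ℝ) 1),
            {p : Fl2 × C1Curves | (p.1.1 ∩ Metric.ball (p.2.1 q) (1 / (m + 1))).Nonempty ∧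
              dist (p.2.1 q) (e i) < (r : ℝ) + 1 / (m + 1)} := by
    ext p
    simp only [Set.mem_setOf_eq, Set.mem_iUnion, Set.mem_iInter, exists_prop]
    exact key p.1.2 p.2.2.continuous
  rw [hset]
  refine MeasurableSet.iUnion fun n => MeasurableSet.iInter fun L => MeasurableSet.iInter fun _ =>
    MeasurableSet.iUnion fun i => MeasurableSet.iUnion fun r => MeasurableSet.iUnion fun _ =>
      MeasurableSet.iInter fun m => MeasurableSet.iUnion fun q => MeasurableSet.iUnion fun hq =>
        measurable_S hq _ _ _
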